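/- Let (D,⊢,⊣,∘) be a di-skew brace and for each a ∈ D define λ_a : D → D by λ_a(b) = a^{-1} ⊢ a ∘ b. Then: (1) λ_a is a bijection preserving both ⊢ and ⊣ (an automorphism of the g-digroup (D,⊢,⊣)), with inverse given by λ_a^{-1}(b) = a^- ∘ (a ⊢ b); (2) λ_{a ∘ b} = λ_a λ_b for all a, b ∈ D. -/
import Mathlib


/-- An element `e` is a *bar-unit* for the pair of operations `(⊢, ⊣)` if
`e ⊢ a = a = a ⊣ e` for all `a`. -/
def IsBarUnit {D : Type*} (vd dv : D → D → D) (e : D) : Prop :=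
  ∀ a : D, vd e a = a ∧ dv a e = a

/-- A generalized digroup (g-digroup): two associative operations `vd` (`⊢`) and `dv` (`⊣`)
satisfying inner associativity and the two bar-side irrelevance laws, admitting at least one
bar-unit, and such that for every element `a` and every bar-unit `e` there is a unique pair
`(I e a, J e a)` with `(I e a) ⊣ a = e = a ⊢ (J e a)`. -/
structure GDigroup (D : Type*) where
  vd : D → D → D
  dv : D → D → D
  vd_assoc : ∀ a b c : D, vd (vd a b) c = vd a (vd b c)
  dv_assoc : ∀ a b c : D, dv (dv a b) c = dv a (dv b c)
  inner_assoc : ∀ a b c : D, dv (vd a b) c = vd a (dv b c)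
  bar_right : ∀ a b c : D, dv a (vd b c) = dv a (dv b c)
  bar_left : ∀ a b c : D, vd (vd a b) c = vd (dv a b) c
  exists_barUnit : ∃ e : D, IsBarUnit vd dv e
  I : D → D → D
  J : D → D → D
  I_spec : ∀ e a : D, IsBarUnit vd dv e → dv (I e a) a = e
  J_spec : ∀ e a : D, IsBarUnit vd dv e → vd a (J e a) = e
  I_unique : ∀ e a x : D, IsBarUnit vd dv e → dv x a = e → x = I e a
  J_unique : ∀ e a y : D, IsBarUnit vd dv e → vd a y = e → y = J e a
/-- A (left) di-skew brace: the additive structure `(D, ⊢, ⊣)` is a g-digroup, the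
multiplicative structure `(D, ∘)` is a right group (an associative operation such that for
all `a b` there is a unique `x` with `a ∘ x = b`), and the compatibility laws
`a ∘ (b ⊢ c) = a ∘ b ⊢ a⁻¹ ⊢ a ∘ c`, `a ∘ (b ⊣ c) = a ∘ b ⊣ a⁻¹ ⊣ a ∘ c` and
`(a ⊢ b) ∘ c = (a ⊣ b) ∘ c` hold, where `a⁻¹ ⊢ x` means `(I e a) ⊢ x` and `x ⊣ a⁻¹` means
`x ⊣ (J e a)` for any bar-unit `e`. -/
structure DiSkewBrace (D : Type*) extends GDigroup D where
  circ : D → D → D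
  circ_assoc : ∀ a b c : D, circ (circ a b) c = circ a (circ b c)
  circ_rightGroup : ∀ a b : D, ∃! x : D, circ a x = b
  d1 : ∀ e : D, IsBarUnit vd dv e →
    ∀ a b c : D, circ a (vd b c) = vd (circ a b) (vd (I e a) (circ a c))
  d2 : ∀ e : D, IsBarUnit vd dv e →
    ∀ a b c : D, circ a (dv b c) = dv (dv (circ a b) (J e a)) (circ a c)
  d3 : ∀ a b c : D, circ (vd a b) c = circ (dv a b) c

/-- Let `(D, ⊢, ⊣, ∘)` be a di-skew brace, `e` a bar-unit and
`λ_a(b) = a⁻¹ ⊢ a ∘ b = (I e a) ⊢ (a ∘ b)`.  Then each `λ_a` is a bijection preserving both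
`⊢` and `⊣` (an automorphism of the g-digroup), its inverse is `b ↦ a⁻ ∘ (a ⊢ b)` (where
`a⁻ ∘ x` denotes the unique left quotient, encoded by the map `ldiv`), and
`λ_{a ∘ b} = λ_a ∘ λ_b`. -/
theorem diSkewBrace_lambda_properties {D : Type*} (S : DiSkewBrace D)
    (e : D) (he : IsBarUnit S.vd S.dv e)
    (lam : D → D → D) (hlam : ∀ a b : D, lam a b = S.vd (S.I e a) (S.circ a b))
    (ldiv : D → D → D) (hldiv : ∀ a b : D, S.circ a (ldiv a b) = b) :
    (∀ a : D, Function.Bijective (lam a)) ∧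
    (∀ a b c : D, lam a (S.vd b c) = S.vd (lam a b) (lam a c)) ∧
    (∀ a b c : D, lam a (S.dv b c) = S.dv (lam a b) (lam a c)) ∧
    (∀ a b : D, lam a (ldiv a (S.vd a b)) = b ∧ ldiv a (S.vd a (lam a b)) = b) ∧
    (∀ a b c : D, lam (S.circ a b) c = lam a (lam b c)) := by
  have eL : ∀ x : D, S.vd e x = x := fun x => (he x).1
  have eR : ∀ x : D, S.dv x e = x := fun x => (he x).2
  have jeq : ∀ a : D, S.J e a = S.vd (S.I e a) e := fun a => by
    calc S.J e a = S.vd e (S.J e a) := (eL _).symm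
      _ = S.vd (S.dv (S.I e a) a) (S.J e a) := by rw [S.I_spec e a he]
      _ = S.vd (S.vd (S.I e a) a) (S.J e a) := (S.bar_left _ _ _).symm
      _ = S.vd (S.I e a) (S.vd a (S.J e a)) := S.vd_assoc _ _ _
      _ = S.vd (S.I e a) e := by rw [S.J_spec e a he]
  have ij : ∀ a x : D, S.vd (S.J e a) x = S.vd (S.I e a) x := fun a x => by
    rw [jeq, S.vd_assoc, eL]
  have ieq : ∀ a : D, S.I e a = S.dv e (S.J e a) := fun a => by
    calc S.I e a = S.dv (S.I e a) e := (eR _).symm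
      _ = S.dv (S.I e a) (S.vd a (S.J e a)) := by rw [S.J_spec e a he]
      _ = S.dv (S.I e a) (S.dv a (S.J e a)) := S.bar_right _ _ _
      _ = S.dv (S.dv (S.I e a) a) (S.J e a) := (S.dv_assoc _ _ _).symm
      _ = S.dv e (S.J e a) := by rw [S.I_spec e a he]
  have dvij : ∀ a x : D, S.dv x (S.I e a) = S.dv x (S.J e a) := fun a x => by
    rw [ieq, ← S.bar_right, eL]
  have iLeft : ∀ a x : D, S.vd (S.I e a) (S.vd a x) = x := fun a x => by
    rw [← S.vd_assoc, S.bar_left, S.I_spec e a he, eL]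
  have iRight : ∀ a x : D, S.vd a (S.vd (S.I e a) x) = x := fun a x => by
    rw [← ij, ← S.vd_assoc, S.J_spec e a he, eL]
  have cinj : ∀ a : D, Function.Injective (S.circ a) := by
    intro a x y h
    obtain ⟨z, -, hz⟩ := S.circ_rightGroup a (S.circ a y)
    exact (hz x h).trans (hz y rfl).symm
  have ldc : ∀ a b : D, ldiv a (S.circ a b) = b := fun a b =>
    cinj a (by rw [hldiv])
  refine ⟨?_, ?_, ?_, ?_, ?_⟩
  · intro a
    refine Function.bijective_iff_has_inverse.mpr ⟨fun b => ldiv a (S.vd a b), ?_, ?_⟩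
    · intro b; simp only [hlam]; rw [iRight, ldc]
    · intro b; simp only [hlam]; rw [hldiv, iLeft]
  · intro a b c
    rw [hlam, hlam, hlam, S.d1 e he, S.vd_assoc]
  · intro a b c
    rw [hlam, hlam, hlam, S.d2 e he, S.inner_assoc, S.bar_right, ← S.dv_assoc, dvij]
  · intro a b
    exact ⟨by rw [hlam, hldiv, iLeft], by rw [hlam, iRight, ldc]⟩
  · intro a b c
    simp only [hlam]
    rw [S.circ_assoc]
    conv_lhs => rw [← iRight b (S.circ b c), S.d1 e he]
    exact iLeft (S.circ a b) _
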